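/- Let 𝕍 be a persistence module over ℝ^n satisfying hypothesis (⋆) with respect to C̄, and let L = {u₀ + t·m : t ∈ ℝ} be a line with positive slope (0 ≺ m). Write push_L(C̄) = {c¹ ≺ c² ≺ … ≺ c^r} in increasing order. For u ≺ v with u, v ∈ L and ε > 0, whenever u + εm ≺ v − εm define Δ_ε(u,v) = ρ(u+εm, v−εm) − ρ(u−εm, v−εm) − ρ(u+εm, v+εm) + ρ(u−εm, v+εm). Then: (a) if u = c^i and v = c^j for some i < j, there exists ε₀ > 0 such that for all 0 < ε ≤ ε₀ with u + εm ≺ v − εm, Δ_ε(u,v) = ρ(c^i, c^{j−1}) − ρ(c^{i−1}, c^{j−1}) − ρ(c^i, c^j) + ρ(c^{i−1}, c^j), with the convention that every term involving c⁰ (the case i = 1 or j = 1) is 0; (b) if u ∉ push_L(C̄) or v ∉ push_L(C̄), there exists ε₀ > 0 such that Δ_ε(u,v) = 0 for all 0 < ε ≤ ε₀ with u + εm ≺ v − εm. Consequently the multiplicity μ_𝕍(u,v) of a point (u,v) with u ≺ v on L can be nonzero only when both u and v belong to push_L(C̄), and then it is given by the formula in (a). -/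

import Mathlib

/-- `L ⊆ ℝⁿ` is a line with positive slope: `L = {u₀ + t·m : t ∈ ℝ}` with all
coordinates of the velocity vector `m` positive. -/
def PosLine {n : ℕ} (L : Set (Fin n → ℝ)) : Prop :=
  ∃ u₀ m : Fin n → ℝ, (∀ i, 0 < m i) ∧ L = {x | ∃ t : ℝ, x = u₀ + t • m}

/-- For `∅ ≠ A ⊆ {1,…,n}`, the open face
`S_A(u) = {x : x_i = u_i for i ∈ A, x_j > u_j for j ∉ A}` of the boundary of
the positive cone of `u`. -/
def SFace {n : ℕ} (A : Finset (Fin n)) (u : Fin n → ℝ) : Set (Fin n → ℝ) :=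
  {x | (∀ i ∈ A, x i = u i) ∧ ∀ j ∉ A, u j < x j}

/-- A persistence module over `ℝⁿ` (with the componentwise order) valued in
finite-dimensional `𝕜`-vector spaces: vector spaces `Vec u` and transition
maps `map : Vec u →ₗ Vec v` for `u ≼ v`, functorially. -/
structure PersistenceModule (n : ℕ) (𝕜 : Type) [Field 𝕜] where
  Vec : (Fin n → ℝ) → Type
  [addCommGroup : ∀ u, AddCommGroup (Vec u)]
  [module : ∀ u, Module 𝕜 (Vec u)]
  [finiteDimensional : ∀ u, FiniteDimensional 𝕜 (Vec u)]
  map : ∀ {u v : Fin n → ℝ}, u ≤ v → (Vec u →ₗ[𝕜] Vec v)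
  map_id : ∀ u : Fin n → ℝ, map (le_refl u) = LinearMap.id
  map_comp : ∀ {u v w : Fin n → ℝ} (h₁ : u ≤ v) (h₂ : v ≤ w),
    (map h₂).comp (map h₁) = map (h₁.trans h₂)

attribute [instance] PersistenceModule.addCommGroup PersistenceModule.module
  PersistenceModule.finiteDimensional

/-- The rank invariant `ρ(u,v) = rank i^{u,v}` (by convention `0` if `u ≼ v`
fails). -/
noncomputable def rho {n : ℕ} {𝕜 : Type} [Field 𝕜] (M : PersistenceModule n 𝕜)
    (u v : Fin n → ℝ) : ℕ :=
  letI : Decidable (u ≤ v) := Classical.dec _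
  if h : u ≤ v then Module.finrank 𝕜 (LinearMap.range (M.map h)) else 0

/-- Hypothesis (⋆) relative to a finite set `C̄ ⊆ ℝⁿ`: for all `u ≼ v`,
`ρ(u,v) = ρ(ū,v̄)` whenever `{c ∈ C̄ : c ≼ u}` is nonempty (`ū` denoting the
greatest element of `{c ∈ C̄ : c ≼ u}`), and `ρ(u,v) = 0` otherwise. -/
def HypStar {n : ℕ} {𝕜 : Type} [Field 𝕜] (M : PersistenceModule n 𝕜)
    (Cbar : Finset (Fin n → ℝ)) : Prop :=
  ∀ u v : Fin n → ℝ, u ≤ v →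
    (((∃ c ∈ Cbar, c ≤ u) →
      ∀ ub vb : Fin n → ℝ, IsGreatest {c | c ∈ Cbar ∧ c ≤ u} ub →
        IsGreatest {c | c ∈ Cbar ∧ c ≤ v} vb → rho M u v = rho M ub vb) ∧
      (¬ (∃ c ∈ Cbar, c ≤ u) → rho M u v = 0))

/-- The strict componentwise order `u ≺ v` on `ℝⁿ`. -/
def SLt {n : ℕ} (u v : Fin n → ℝ) : Prop := ∀ i, u i < v i

/-- The multiplicity `μ_𝕍(u,v)` of a pair `u ≺ v`: the minimum over vectors
`e ≻ 0` with `u + e ≺ v − e` of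
`ρ(u+e,v−e) − ρ(u−e,v−e) − ρ(u+e,v+e) + ρ(u−e,v+e)`. -/
noncomputable def mu {n : ℕ} {𝕜 : Type} [Field 𝕜] (M : PersistenceModule n 𝕜)
    (u v : Fin n → ℝ) : ℤ :=
  sInf {z : ℤ | ∃ e : Fin n → ℝ, SLt 0 e ∧ SLt (u + e) (v - e) ∧
    z = (rho M (u + e) (v - e) : ℤ) - (rho M (u - e) (v - e) : ℤ)
      - (rho M (u + e) (v + e) : ℤ) + (rho M (u - e) (v + e) : ℤ)}

/-- The multiplicity at infinity `μ_𝕍(u,∞)`: the minimum over `e ≻ 0` and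
`v ≽ u` of `ρ(u+e,v) − ρ(u−e,v)`. -/
noncomputable def muInf {n : ℕ} {𝕜 : Type} [Field 𝕜] (M : PersistenceModule n 𝕜)
    (u : Fin n → ℝ) : ℤ :=
  sInf {z : ℤ | ∃ e v : Fin n → ℝ, SLt 0 e ∧ u ≤ v ∧
    z = (rho M (u + e) v : ℤ) - (rho M (u - e) v : ℤ)}

/-- `ρ(cⁱ, cʲ)` as an integer, with the convention that any term involving the
index `0` (i.e. `c⁰`) is `0`. -/
noncomputable def rhoz {n : ℕ} {𝕜 : Type} [Field 𝕜] (M : PersistenceModule n 𝕜)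
    (c : ℕ → (Fin n → ℝ)) (i j : ℕ) : ℤ :=
  if i = 0 ∨ j = 0 then 0 else (rho M (c i) (c j) : ℤ)

open Module LinearMap Submodule in
lemma rank_aux {𝕜 : Type} [Field 𝕜] {U V W : Type} [AddCommGroup U] [Module 𝕜 U]
    [AddCommGroup V] [Module 𝕜 V] [AddCommGroup W] [Module 𝕜 W]
    [FiniteDimensional 𝕜 V]
    (f : U →ₗ[𝕜] V) (g : V →ₗ[𝕜] W) :
    finrank 𝕜 (range (g ∘ₗ f)) + finrank 𝕜 ↥(ker g ⊓ range f) = finrank 𝕜 ↥(range f) := by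
  have h1 := (g.domRestrict (range f)).finrank_range_add_finrank_ker
  have h2 : range (g.domRestrict (range f)) = range (g ∘ₗ f) := by
    rw [range_domRestrict, range_comp]
  have h3 : ker (g.domRestrict (range f)) = comap (range f).subtype (ker g ⊓ range f) := by
    rw [ker_domRestrict, Submodule.comap_inf, Submodule.comap_subtype_self, inf_top_eq]
  have h4 : finrank 𝕜 ↥(comap (range f).subtype (ker g ⊓ range f)) = finrank 𝕜 ↥(ker g ⊓ range f) :=
    (Submodule.comapSubtypeEquivOfLe inf_le_right).finrank_eq
  rw [h2, h3, h4] at h1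
  exact h1

lemma rho_eq {n : ℕ} {𝕜 : Type} [Field 𝕜] (M : PersistenceModule n 𝕜)
    {u v : Fin n → ℝ} (h : u ≤ v) :
    rho M u v = Module.finrank 𝕜 (LinearMap.range (M.map h)) := by
  unfold rho
  rw [dif_pos h]

lemma rho_P {n : ℕ} {𝕜 : Type} [Field 𝕜] (M : PersistenceModule n 𝕜)
    {a a' b b' : Fin n → ℝ} (h1 : a ≤ a') (h2 : a' ≤ b) (h3 : b ≤ b') :
    rho M a b + rho M a' b' ≤ rho M a' b + rho M a b' := by
  have hab : a ≤ b := h1.trans h2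
  have hab' : a ≤ b' := hab.trans h3
  have ha'b' : a' ≤ b' := h2.trans h3
  rw [rho_eq M hab, rho_eq M hab', rho_eq M h2, rho_eq M ha'b']
  have e1 : M.map hab' = (M.map h3) ∘ₗ (M.map hab) := (M.map_comp hab h3).symm
  have e2 : M.map ha'b' = (M.map h3) ∘ₗ (M.map h2) := (M.map_comp h2 h3).symm
  have i1 := rank_aux (M.map hab) (M.map h3)
  have i2 := rank_aux (M.map h2) (M.map h3)
  have hr : LinearMap.range (M.map hab) ≤ LinearMap.range (M.map h2) := by
    have : M.map hab = (M.map h2) ∘ₗ (M.map h1) := (M.map_comp h1 h2).symm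
    rw [this]
    exact LinearMap.range_comp_le_range _ _
  have hmono : Module.finrank 𝕜 ↥(LinearMap.ker (M.map h3) ⊓ LinearMap.range (M.map hab)) ≤
      Module.finrank 𝕜 ↥(LinearMap.ker (M.map h3) ⊓ LinearMap.range (M.map h2)) :=
    Submodule.finrank_mono (inf_le_inf_left _ hr)
  rw [e1, e2]
  omega

lemma rho_mono_right {n : ℕ} {𝕜 : Type} [Field 𝕜] (M : PersistenceModule n 𝕜)
    {a b b' : Fin n → ℝ} (hab : a ≤ b) (hbb : b ≤ b') :
    rho M a b' ≤ rho M a b := by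
  have hab' : a ≤ b' := hab.trans hbb
  rw [rho_eq M hab, rho_eq M hab']
  have e1 : M.map hab' = (M.map hbb) ∘ₗ (M.map hab) := (M.map_comp hab hbb).symm
  have i1 := rank_aux (M.map hab) (M.map hbb)
  rw [e1]
  omega

lemma rho_Qmono {n : ℕ} {𝕜 : Type} [Field 𝕜] (M : PersistenceModule n 𝕜)
    {a₁ a₁' a₂' a₂ b₁ b₁' b₂' b₂ : Fin n → ℝ}
    (ha1 : a₁ ≤ a₁') (ha2 : a₁' ≤ a₂') (ha3 : a₂' ≤ a₂) (hab : a₂ ≤ b₁)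
    (hb1 : b₁ ≤ b₁') (hb2 : b₁' ≤ b₂') (hb3 : b₂' ≤ b₂) :
    (rho M a₂' b₁' : ℤ) - rho M a₁' b₁' - rho M a₂' b₂' + rho M a₁' b₂'
      ≤ (rho M a₂ b₁ : ℤ) - rho M a₁ b₁ - rho M a₂ b₂ + rho M a₁ b₂ := by
  have h12 : a₁ ≤ a₂ := ha1.trans (ha2.trans ha3)
  have P1 := rho_P M h12 hab hb1
  have P2 := rho_P M h12 (hab.trans (hb1.trans hb2)) hb3
  have P3 := rho_P M ha3 (hab.trans hb1) hb2
  have P4 := rho_P M ha2 (ha3.trans (hab.trans hb1)) hb2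
  have P5 := rho_P M ha1 (ha2.trans (ha3.trans (hab.trans hb1))) hb2
  omega

lemma rho_Qhalf {n : ℕ} {𝕜 : Type} [Field 𝕜] (M : PersistenceModule n 𝕜)
    {Di aP bM Dj1 Dj bP : Fin n → ℝ}
    (h1 : Di ≤ aP) (h2 : aP ≤ bM) (h3 : bM ≤ Dj1) (h4 : Dj1 ≤ Dj) (h5 : Dj ≤ bP) :
    (rho M Di Dj1 : ℤ) - rho M Di Dj ≤ (rho M aP bM : ℤ) - rho M aP bP := by
  have m1 : rho M aP Dj1 ≤ rho M aP bM := rho_mono_right M h2 h3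
  have m2 : rho M aP bP ≤ rho M aP Dj := rho_mono_right M (h2.trans (h3.trans h4)) h5
  have m3 := rho_P M h1 (h2.trans h3) h4
  omega

set_option maxHeartbeats 4000000


/-- let `𝕍` satisfy hypothesis (⋆) w.r.t. `C̄`, `L` the line
`{u₀ + t·m}` with `0 ≺ m`, and `push_L(C̄) = {c¹ ≺ … ≺ c^r}`. Writing
`Δ_ε(u,v) = ρ(u+εm,v−εm) − ρ(u−εm,v−εm) − ρ(u+εm,v+εm) + ρ(u−εm,v+εm)`:
(a) if `u = cⁱ`, `v = cʲ` with `i < j`, then for all small enough `ε > 0`,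
`Δ_ε(u,v) = ρ(cⁱ,c^{j−1}) − ρ(c^{i−1},c^{j−1}) − ρ(cⁱ,cʲ) + ρ(c^{i−1},cʲ)`
(terms involving `c⁰` being `0`);
(b) if `u ∉ push_L(C̄)` or `v ∉ push_L(C̄)`, then `Δ_ε(u,v) = 0` for all small
enough `ε > 0`.
Consequently, for `u ≺ v` on `L` the multiplicity `μ_𝕍(u,v)` can be nonzero
only when both `u` and `v` belong to `push_L(C̄)`, and then it is given by the
formula in (a). -/
theorem stmt_17 {n : ℕ} (hn : 0 < n) {𝕜 : Type} [Field 𝕜]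
    (M : PersistenceModule n 𝕜)
    (Cbar : Finset (Fin n → ℝ)) (hCne : Cbar.Nonempty)
    (hclosed : ∀ a ∈ Cbar, ∀ b ∈ Cbar, a ⊔ b ∈ Cbar)
    (hstar : HypStar M Cbar)
    (u₀ m : Fin n → ℝ) (hm : SLt 0 m)
    (L : Set (Fin n → ℝ)) (hLdef : L = {x | ∃ t : ℝ, x = u₀ + t • m})
    (pushL : (Fin n → ℝ) → (Fin n → ℝ))
    (hpush : ∀ w : Fin n → ℝ, IsLeast {x | x ∈ L ∧ w ≤ x} (pushL w))
    (r : ℕ) (hr : 1 ≤ r) (c : ℕ → (Fin n → ℝ))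
    (hcmono : ∀ i j : ℕ, 1 ≤ i → i < j → j ≤ r → SLt (c i) (c j))
    (hcimg : pushL '' (↑Cbar : Set (Fin n → ℝ)) =
      {x | ∃ i : ℕ, 1 ≤ i ∧ i ≤ r ∧ x = c i}) :
    (∀ i j : ℕ, 1 ≤ i → i < j → j ≤ r →
      ∃ ε₀ : ℝ, 0 < ε₀ ∧ ∀ ε : ℝ, 0 < ε → ε ≤ ε₀ →
        SLt (c i + ε • m) (c j - ε • m) →
        (rho M (c i + ε • m) (c j - ε • m) : ℤ)
            - (rho M (c i - ε • m) (c j - ε • m) : ℤ)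
            - (rho M (c i + ε • m) (c j + ε • m) : ℤ)
            + (rho M (c i - ε • m) (c j + ε • m) : ℤ)
          = rhoz M c i (j - 1) - rhoz M c (i - 1) (j - 1)
            - rhoz M c i j + rhoz M c (i - 1) j) ∧
    (∀ u v : Fin n → ℝ, u ∈ L → v ∈ L → SLt u v →
      (u ∉ pushL '' (↑Cbar : Set (Fin n → ℝ)) ∨
        v ∉ pushL '' (↑Cbar : Set (Fin n → ℝ))) →
      ∃ ε₀ : ℝ, 0 < ε₀ ∧ ∀ ε : ℝ, 0 < ε → ε ≤ ε₀ →
        SLt (u + ε • m) (v - ε • m) →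
        (rho M (u + ε • m) (v - ε • m) : ℤ)
            - (rho M (u - ε • m) (v - ε • m) : ℤ)
            - (rho M (u + ε • m) (v + ε • m) : ℤ)
            + (rho M (u - ε • m) (v + ε • m) : ℤ) = 0) ∧
    (∀ u v : Fin n → ℝ, u ∈ L → v ∈ L → SLt u v → mu M u v ≠ 0 →
      u ∈ pushL '' (↑Cbar : Set (Fin n → ℝ)) ∧
        v ∈ pushL '' (↑Cbar : Set (Fin n → ℝ))) ∧
    (∀ i j : ℕ, 1 ≤ i → i < j → j ≤ r →
      mu M (c i) (c j) = rhoz M c i (j - 1) - rhoz M c (i - 1) (j - 1)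
        - rhoz M c i j + rhoz M c (i - 1) j) := by
  classical
  -- ## basic line geometry
  have i0 : Fin n := ⟨0, hn⟩
  have hm0 : 0 < m i0 := hm i0
  set τ : (Fin n → ℝ) → ℝ := fun x => (x i0 - u₀ i0) / m i0 with hτdef
  have hmemL : ∀ s : ℝ, u₀ + s • m ∈ L := by
    intro s; rw [hLdef]; exact ⟨s, rfl⟩
  have hτt : ∀ s : ℝ, τ (u₀ + s • m) = s := by
    intro s
    simp only [hτdef, Pi.add_apply, Pi.smul_apply, smul_eq_mul]
    field_simp
    ring
  have hLrep : ∀ x ∈ L, x = u₀ + τ x • m := by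
    intro x hx
    rw [hLdef] at hx
    obtain ⟨s, rfl⟩ := hx
    rw [hτt]
  have hle : ∀ s s' : ℝ, (u₀ + s • m) ≤ (u₀ + s' • m) ↔ s ≤ s' := by
    intro s s'
    constructor
    · intro h
      have := h i0
      simp only [Pi.add_apply, Pi.smul_apply, smul_eq_mul] at this
      nlinarith
    · intro h i
      simp only [Pi.add_apply, Pi.smul_apply, smul_eq_mul]
      nlinarith [hm i, mul_le_mul_of_nonneg_right h (hm i).le]
  have hlt : ∀ s s' : ℝ, SLt (u₀ + s • m) (u₀ + s' • m) ↔ s < s' := by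
    intro s s'
    constructor
    · intro h
      have := h i0
      simp only [Pi.add_apply, Pi.smul_apply, smul_eq_mul] at this
      nlinarith
    · intro h i
      simp only [Pi.add_apply, Pi.smul_apply, smul_eq_mul]
      nlinarith [hm i, mul_lt_mul_of_pos_right h (hm i)]
  have hshift : ∀ s e : ℝ, (u₀ + s • m) + e • m = u₀ + (s + e) • m := by
    intro s e; funext i
    simp only [Pi.add_apply, Pi.smul_apply, smul_eq_mul]; ring
  have hshift' : ∀ s e : ℝ, (u₀ + s • m) - e • m = u₀ + (s - e) • m := by
    intro s e; funext i
    simp only [Pi.add_apply, Pi.sub_apply, Pi.smul_apply, smul_eq_mul]; ring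
  -- ## push and c basic facts
  have hpushLmem : ∀ w, pushL w ∈ L := fun w => (hpush w).1.1
  have hpushge : ∀ w, w ≤ pushL w := fun w => (hpush w).1.2
  have hpushle : ∀ w x, x ∈ L → w ≤ x → pushL w ≤ x := fun w x hx hwx => (hpush w).2 ⟨hx, hwx⟩
  have hcmemim : ∀ l, 1 ≤ l → l ≤ r → c l ∈ pushL '' (↑Cbar : Set (Fin n → ℝ)) := by
    intro l h1 h2
    rw [hcimg]
    exact ⟨l, h1, h2, rfl⟩
  have hcmemL : ∀ l, 1 ≤ l → l ≤ r → c l ∈ L := by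
    intro l h1 h2
    obtain ⟨x, _, hx⟩ := hcmemim l h1 h2
    rw [← hx]; exact hpushLmem x
  set t : ℕ → ℝ := fun l => τ (c l) with htdef
  have hct : ∀ l, 1 ≤ l → l ≤ r → c l = u₀ + t l • m := fun l h1 h2 => hLrep _ (hcmemL l h1 h2)
  have htmono : ∀ l l', 1 ≤ l → l < l' → l' ≤ r → t l < t l' := by
    intro l l' h1 h2 h3
    have hs := hcmono l l' h1 h2 h3
    rw [hct l h1 (le_of_lt (lt_of_lt_of_le h2 h3)), hct l' (h1.trans h2.le) h3] at hs
    exact (hlt _ _).1 hs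
  have htmono' : ∀ l l', 1 ≤ l → l ≤ l' → l' ≤ r → t l ≤ t l' := by
    intro l l' h1 h2 h3
    rcases h2.lt_or_eq with h | h
    · exact (htmono l l' h1 h h3).le
    · rw [h]
  have hcle : ∀ l l', 1 ≤ l → l ≤ l' → l' ≤ r → c l ≤ c l' := by
    intro l l' h1 h2 h3
    rw [hct l h1 (h2.trans h3), hct l' (h1.trans h2) h3, hle]
    exact htmono' l l' h1 h2 h3
  have hcle' : ∀ l, 1 ≤ l → l ≤ r → ∀ s : ℝ, (c l ≤ u₀ + s • m ↔ t l ≤ s) := by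
    intro l h1 h2 s
    rw [hct l h1 h2]; exact hle _ _
  have hidxle : ∀ l l', 1 ≤ l → l ≤ r → 1 ≤ l' → l' ≤ r → c l ≤ c l' → l ≤ l' := by
    intro l l' h1 h2 h1' h2' hcc
    by_contra hc
    push_neg at hc
    have ht : t l' < t l := htmono l' l h1' hc h2
    rw [hct l h1 h2, hct l' h1' h2', hle] at hcc
    linarith
  have hpushc : ∀ x ∈ Cbar, ∃ l, 1 ≤ l ∧ l ≤ r ∧ pushL x = c l := by
    intro x hx
    have : pushL x ∈ pushL '' (↑Cbar : Set (Fin n → ℝ)) := ⟨x, hx, rfl⟩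
    rw [hcimg] at this
    obtain ⟨l, h1, h2, h3⟩ := this
    exact ⟨l, h1, h2, h3⟩
  -- ## strictly-below lemma
  have hstrictidx : ∀ x ∈ Cbar, ∀ w ∈ L, (∀ i, x i < w i) →
      ∃ l, 1 ≤ l ∧ l ≤ r ∧ x ≤ c l ∧ t l < τ w := by
    intro x hxC w hwL hxw
    have hne : (Finset.univ : Finset (Fin n)).Nonempty := ⟨i0, Finset.mem_univ i0⟩
    set δ : ℝ := Finset.univ.inf' hne (fun i => (w i - x i) / m i) with hδdef
    have hδpos : 0 < δ := by
      rw [hδdef, Finset.lt_inf'_iff]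
      intro i _
      exact div_pos (sub_pos.2 (hxw i)) (hm i)
    have hxle : x ≤ w - δ • m := by
      intro i
      have hδle : δ ≤ (w i - x i) / m i := Finset.inf'_le _ (Finset.mem_univ i)
      have := (le_div_iff₀ (hm i)).1 hδle
      simp only [Pi.sub_apply, Pi.smul_apply, smul_eq_mul]
      linarith
    have hwrep : w = u₀ + τ w • m := hLrep w hwL
    have hwmem : w - δ • m ∈ L := by rw [hwrep, hshift']; exact hmemL _
    have hpush1 : pushL x ≤ w - δ • m := hpushle x _ hwmem hxle
    obtain ⟨l, h1, h2, h3⟩ := hpushc x hxC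
    refine ⟨l, h1, h2, (h3 ▸ hpushge x), ?_⟩
    rw [h3] at hpush1
    rw [hct l h1 h2] at hpush1
    rw [hwrep, hshift'] at hpush1
    rw [hle] at hpush1
    linarith
  -- ## greatest lower c-bounds
  have hbar : ∀ w : Fin n → ℝ, (∃ c' ∈ Cbar, c' ≤ w) →
      ∃ d, IsGreatest {c' | c' ∈ Cbar ∧ c' ≤ w} d := by
    intro w hw
    obtain ⟨c', hc'C, hc'w⟩ := hw
    set s : Finset (Fin n → ℝ) := Cbar.filter (fun x => x ≤ w) with hsdef
    have hsne : s.Nonempty := ⟨c', by simp [hsdef, hc'C, hc'w]⟩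
    have hmem : s.sup' hsne id ∈ {x : Fin n → ℝ | x ∈ Cbar ∧ x ≤ w} := by
      apply Finset.sup'_mem {x : Fin n → ℝ | x ∈ Cbar ∧ x ≤ w}
      · rintro x ⟨hx1, hx2⟩ y ⟨hy1, hy2⟩
        exact ⟨hclosed x hx1 y hy1, sup_le hx2 hy2⟩
      · intro i hi
        simp only [hsdef, Finset.mem_filter] at hi
        exact ⟨hi.1, hi.2⟩
    refine ⟨s.sup' hsne id, hmem, ?_⟩
    intro x hx
    exact Finset.le_sup' (f := id) (by simp [hsdef, hx.1, hx.2] : x ∈ s)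
  have hDex : ∀ l : ℕ, ∃ d, 1 ≤ l → l ≤ r → IsGreatest {c' | c' ∈ Cbar ∧ c' ≤ c l} d := by
    intro l
    by_cases h : 1 ≤ l ∧ l ≤ r
    · obtain ⟨x, hxC, hx⟩ := hcmemim l h.1 h.2
      obtain ⟨d, hd⟩ := hbar (c l) ⟨x, hxC, hx ▸ hpushge x⟩
      exact ⟨d, fun _ _ => hd⟩
    · exact ⟨0, fun h1 h2 => absurd ⟨h1, h2⟩ h⟩
  choose D hD using hDex
  -- ## existence of maximal index
  have hKex : ∀ w : Fin n → ℝ, (∃ l, 1 ≤ l ∧ l ≤ r ∧ c l ≤ w) →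
      ∃ k, 1 ≤ k ∧ k ≤ r ∧ c k ≤ w ∧ ∀ l, 1 ≤ l → l ≤ r → c l ≤ w → l ≤ k := by
    intro w hw
    obtain ⟨l0, h1, h2, h3⟩ := hw
    set s : Finset ℕ := (Finset.Icc 1 r).filter (fun l => c l ≤ w) with hsdef
    have hsne : s.Nonempty := ⟨l0, by simp [hsdef, Finset.mem_filter, Finset.mem_Icc, h1, h2, h3]⟩
    have hmax := Finset.max'_mem s hsne
    simp only [hsdef, Finset.mem_filter, Finset.mem_Icc] at hmax
    refine ⟨s.max' hsne, hmax.1.1, hmax.1.2, hmax.2, ?_⟩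
    intro l hl1 hl2 hl3
    exact Finset.le_max' s l (by simp [hsdef, Finset.mem_filter, Finset.mem_Icc, hl1, hl2, hl3])
  -- ## transfer of greatestness to D
  have hK : ∀ w ∈ L, ∀ k, 1 ≤ k → k ≤ r → c k ≤ w → (∀ l, 1 ≤ l → l ≤ r → c l ≤ w → l ≤ k) →
      IsGreatest {c' | c' ∈ Cbar ∧ c' ≤ w} (D k) := by
    intro w hw k hk1 hk2 hck hmax
    have hDk := hD k hk1 hk2
    constructor
    · exact ⟨hDk.1.1, hDk.1.2.trans hck⟩
    · rintro x ⟨hxC, hxw⟩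
      obtain ⟨l, hl1, hl2, hpl⟩ := hpushc x hxC
      have hclw : c l ≤ w := hpl ▸ hpushle x w hw hxw
      have hlk : l ≤ k := hmax l hl1 hl2 hclw
      have hxck : x ≤ c k := (hpl ▸ hpushge x).trans (hcle l k hl1 hlk hk2)
      exact hDk.2 ⟨hxC, hxck⟩
  have hKc : ∀ a, 1 ≤ a → a ≤ r → IsGreatest {c' | c' ∈ Cbar ∧ c' ≤ c a} (D a) :=
    fun a h1 h2 => hD a h1 h2
  -- ## rho on the line via indices
  have hrhoeq : ∀ w w' : Fin n → ℝ, ∀ a b : ℕ, w ∈ L → w' ∈ L → w ≤ w' →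
      1 ≤ a → a ≤ r → c a ≤ w → (∀ l, 1 ≤ l → l ≤ r → c l ≤ w → l ≤ a) →
      1 ≤ b → b ≤ r → c b ≤ w' → (∀ l, 1 ≤ l → l ≤ r → c l ≤ w' → l ≤ b) →
      rho M w w' = rho M (c a) (c b) := by
    intro w w' a b hw hw' hww' ha1 ha2 ha3 ha4 hb1 hb2 hb3 hb4
    have ga := hK w hw a ha1 ha2 ha3 ha4
    have gb := hK w' hw' b hb1 hb2 hb3 hb4
    have hab : a ≤ b := hb4 a ha1 ha2 (ha3.trans hww')
    have hcab : c a ≤ c b := hcle a b ha1 hab hb2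
    have step1 := (hstar w w' hww').1 ⟨D a, ga.1.1, ga.1.2⟩ (D a) (D b) ga gb
    have maxa : ∀ l, 1 ≤ l → l ≤ r → c l ≤ c a → l ≤ a := fun l h1 h2 h3 =>
      hidxle l a h1 h2 ha1 ha2 h3
    have maxb : ∀ l, 1 ≤ l → l ≤ r → c l ≤ c b → l ≤ b := fun l h1 h2 h3 =>
      hidxle l b h1 h2 hb1 hb2 h3
    have ga' := hKc a ha1 ha2
    have gb' := hKc b hb1 hb2
    have step2 := (hstar (c a) (c b) hcab).1 ⟨D a, ga'.1.1, ga'.1.2⟩ (D a) (D b) ga' gb'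
    rw [step1, step2]
  have hrhoDD : ∀ a b : ℕ, 1 ≤ a → a ≤ r → 1 ≤ b → b ≤ r → a ≤ b →
      rho M (c a) (c b) = rho M (D a) (D b) := by
    intro a b ha1 ha2 hb1 hb2 hab
    have hcab : c a ≤ c b := hcle a b ha1 hab hb2
    have ga' := hKc a ha1 ha2
    have gb' := hKc b hb1 hb2
    exact (hstar (c a) (c b) hcab).1 ⟨D a, ga'.1.1, ga'.1.2⟩ (D a) (D b) ga' gb'
  have hnoc : ∀ w ∈ L, (∀ l, 1 ≤ l → l ≤ r → ¬ c l ≤ w) → ¬ (∃ c' ∈ Cbar, c' ≤ w) := by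
    rintro w hw hno ⟨x, hxC, hxw⟩
    obtain ⟨l, h1, h2, h3⟩ := hpushc x hxC
    exact hno l h1 h2 (h3 ▸ hpushle x w hw hxw)
  have hrho0 : ∀ w w' : Fin n → ℝ, w ≤ w' → ¬ (∃ c' ∈ Cbar, c' ≤ w) → rho M w w' = 0 :=
    fun w w' h hne => (hstar w w' h).2 hne
  -- ## Part (a)
  have parta : ∀ i j : ℕ, 1 ≤ i → i < j → j ≤ r →
      ∃ ε₀ : ℝ, 0 < ε₀ ∧ ∀ ε : ℝ, 0 < ε → ε ≤ ε₀ →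
        SLt (c i + ε • m) (c j - ε • m) →
        (rho M (c i + ε • m) (c j - ε • m) : ℤ)
            - (rho M (c i - ε • m) (c j - ε • m) : ℤ)
            - (rho M (c i + ε • m) (c j + ε • m) : ℤ)
            + (rho M (c i - ε • m) (c j + ε • m) : ℤ)
          = rhoz M c i (j - 1) - rhoz M c (i - 1) (j - 1)
            - rhoz M c i j + rhoz M c (i - 1) j := by
    intro i j hi1 hij hjr
    have hir : i ≤ r := (hij.trans_le hjr).le
    have hj1 : 1 ≤ j := hi1.trans hij.le
    have hj2 : 2 ≤ j := by omega
    have hj11 : 1 ≤ j - 1 := by omega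
    have hj1r : j - 1 ≤ r := by omega
    set Ai : ℝ := if i + 1 ≤ r then (t (i+1) - t i)/2 else 1 with hAidef
    set Aj : ℝ := if j + 1 ≤ r then (t (j+1) - t j)/2 else 1 with hAjdef
    set Bi : ℝ := if 2 ≤ i then (t i - t (i-1))/2 else 1 with hBidef
    set Bj : ℝ := (t j - t (j-1))/2 with hBjdef
    have hBj0 : t (j-1) < t j := htmono (j-1) j hj11 (by omega) hjr
    have hAipos : 0 < Ai := by
      rw [hAidef]; split
      · next h => have := htmono i (i+1) hi1 (by omega) h; linarith
      · norm_num
    have hAjpos : 0 < Aj := by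
      rw [hAjdef]; split
      · next h => have := htmono j (j+1) hj1 (by omega) h; linarith
      · norm_num
    have hBipos : 0 < Bi := by
      rw [hBidef]; split
      · next h => have := htmono (i-1) i (by omega) (by omega) hir; linarith
      · norm_num
    have hBjpos : 0 < Bj := by rw [hBjdef]; linarith
    refine ⟨min (min Ai Bi) (min Aj Bj), lt_min (lt_min hAipos hBipos) (lt_min hAjpos hBjpos), ?_⟩
    intro ε hε hεle hslt0
    have hεAi : ε ≤ Ai := hεle.trans ((min_le_left _ _).trans (min_le_left _ _))
    have hεBi : ε ≤ Bi := hεle.trans ((min_le_left _ _).trans (min_le_right _ _))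
    have hεAj : ε ≤ Aj := hεle.trans ((min_le_right _ _).trans (min_le_left _ _))
    have hεBj : ε ≤ Bj := hεle.trans ((min_le_right _ _).trans (min_le_right _ _))
    rw [hBjdef] at hεBj
    have hui : c i + ε • m = u₀ + (t i + ε) • m := by rw [hct i hi1 hir, hshift]
    have huim : c i - ε • m = u₀ + (t i - ε) • m := by rw [hct i hi1 hir, hshift']
    have hvjp : c j + ε • m = u₀ + (t j + ε) • m := by rw [hct j hj1 hjr, hshift]
    have hvjm : c j - ε • m = u₀ + (t j - ε) • m := by rw [hct j hj1 hjr, hshift']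
    have htij : t i < t j := htmono i j hi1 hij hjr
    have hsltt : t i + ε < t j - ε := by
      rw [hui, hvjm, hlt] at hslt0; exact hslt0
    -- K facts
    have K1le : c i ≤ c i + ε • m := by rw [hui, hcle' i hi1 hir]; linarith
    have K1max : ∀ l, 1 ≤ l → l ≤ r → c l ≤ c i + ε • m → l ≤ i := by
      intro l hl1 hl2 hcl
      rw [hui, hcle' l hl1 hl2] at hcl
      by_contra hc; push_neg at hc
      have hi1r : i + 1 ≤ r := le_trans (by omega) hl2
      rw [hAidef, if_pos hi1r] at hεAi
      have h1 : t (i+1) ≤ t l := htmono' (i+1) l (by omega) (by omega) hl2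
      have h2 : t i < t (i+1) := htmono i (i+1) hi1 (by omega) hi1r
      linarith
    have K4le : c j ≤ c j + ε • m := by rw [hvjp, hcle' j hj1 hjr]; linarith
    have K4max : ∀ l, 1 ≤ l → l ≤ r → c l ≤ c j + ε • m → l ≤ j := by
      intro l hl1 hl2 hcl
      rw [hvjp, hcle' l hl1 hl2] at hcl
      by_contra hc; push_neg at hc
      have hj1r' : j + 1 ≤ r := le_trans (by omega) hl2
      rw [hAjdef, if_pos hj1r'] at hεAj
      have h1 : t (j+1) ≤ t l := htmono' (j+1) l (by omega) (by omega) hl2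
      have h2 : t j < t (j+1) := htmono j (j+1) hj1 (by omega) hj1r'
      linarith
    have K3le : c (j-1) ≤ c j - ε • m := by
      rw [hvjm, hcle' (j-1) hj11 hj1r]; linarith
    have K3max : ∀ l, 1 ≤ l → l ≤ r → c l ≤ c j - ε • m → l ≤ j - 1 := by
      intro l hl1 hl2 hcl
      rw [hvjm, hcle' l hl1 hl2] at hcl
      by_contra hc; push_neg at hc
      have h1 : t j ≤ t l := htmono' j l hj1 (by omega) hl2
      linarith
    -- order facts
    have hle_pm : c i + ε • m ≤ c j - ε • m := by
      rw [hui, hvjm, hle]; linarith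
    have hle_mm : c i - ε • m ≤ c j - ε • m := by
      rw [huim, hvjm, hle]; linarith
    have hle_pp : c i + ε • m ≤ c j + ε • m := by
      rw [hui, hvjp, hle]; linarith
    have hle_mp : c i - ε • m ≤ c j + ε • m := by
      rw [huim, hvjp, hle]; linarith
    have hmemip : c i + ε • m ∈ L := hui ▸ hmemL _
    have hmemim : c i - ε • m ∈ L := huim ▸ hmemL _
    have hmemjp : c j + ε • m ∈ L := hvjp ▸ hmemL _
    have hmemjm : c j - ε • m ∈ L := hvjm ▸ hmemL _
    have R1 : rho M (c i + ε • m) (c j - ε • m) = rho M (c i) (c (j-1)) :=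
      hrhoeq _ _ i (j-1) hmemip hmemjm hle_pm hi1 hir K1le K1max hj11 hj1r K3le K3max
    have R3 : rho M (c i + ε • m) (c j + ε • m) = rho M (c i) (c j) :=
      hrhoeq _ _ i j hmemip hmemjp hle_pp hi1 hir K1le K1max hj1 hjr K4le K4max
    by_cases hi2 : 2 ≤ i
    · have hi11 : 1 ≤ i - 1 := by omega
      have hi1r' : i - 1 ≤ r := by omega
      rw [hBidef, if_pos hi2] at hεBi
      have hBi0 : t (i-1) < t i := htmono (i-1) i hi11 (by omega) hir
      have K2le : c (i-1) ≤ c i - ε • m := by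
        rw [huim, hcle' (i-1) hi11 hi1r']; linarith
      have K2max : ∀ l, 1 ≤ l → l ≤ r → c l ≤ c i - ε • m → l ≤ i - 1 := by
        intro l hl1 hl2 hcl
        rw [huim, hcle' l hl1 hl2] at hcl
        by_contra hc; push_neg at hc
        have h1 : t i ≤ t l := htmono' i l hi1 (by omega) hl2
        linarith
      have R2 : rho M (c i - ε • m) (c j - ε • m) = rho M (c (i-1)) (c (j-1)) :=
        hrhoeq _ _ (i-1) (j-1) hmemim hmemjm hle_mm hi11 hi1r' K2le K2max hj11 hj1r K3le K3max
      have R4 : rho M (c i - ε • m) (c j + ε • m) = rho M (c (i-1)) (c j) :=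
        hrhoeq _ _ (i-1) j hmemim hmemjp hle_mp hi11 hi1r' K2le K2max hj1 hjr K4le K4max
      rw [R1, R2, R3, R4]
      unfold rhoz
      rw [if_neg (by omega), if_neg (by omega), if_neg (by omega), if_neg (by omega)]
    · have hi1' : i = 1 := by omega
      have K2none : ∀ l, 1 ≤ l → l ≤ r → ¬ c l ≤ c i - ε • m := by
        intro l hl1 hl2 hcl
        rw [huim, hcle' l hl1 hl2] at hcl
        have h1 : t i ≤ t l := htmono' i l hi1 (by omega) hl2
        linarith
      have hne := hnoc _ hmemim K2none
      have R2 : rho M (c i - ε • m) (c j - ε • m) = 0 := hrho0 _ _ hle_mm hne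
      have R4 : rho M (c i - ε • m) (c j + ε • m) = 0 := hrho0 _ _ hle_mp hne
      rw [R1, R2, R3, R4]
      unfold rhoz
      rw [if_neg (by omega), if_pos (by omega), if_neg (by omega), if_pos (by omega)]
      push_cast
      ring
  -- ## Part (b)
  have partb : ∀ u v : Fin n → ℝ, u ∈ L → v ∈ L → SLt u v →
      (u ∉ pushL '' (↑Cbar : Set (Fin n → ℝ)) ∨
        v ∉ pushL '' (↑Cbar : Set (Fin n → ℝ))) →
      ∃ ε₀ : ℝ, 0 < ε₀ ∧ ∀ ε : ℝ, 0 < ε → ε ≤ ε₀ →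
        SLt (u + ε • m) (v - ε • m) →
        (rho M (u + ε • m) (v - ε • m) : ℤ)
            - (rho M (u - ε • m) (v - ε • m) : ℤ)
            - (rho M (u + ε • m) (v + ε • m) : ℤ)
            + (rho M (u - ε • m) (v + ε • m) : ℤ) = 0 := by
    intro u v huL hvL huv hcase
    have hurep : u = u₀ + τ u • m := hLrep u huL
    have hvrep : v = u₀ + τ v • m := hLrep v hvL
    set a : ℝ := τ u with hadef
    set b : ℝ := τ v with hbdef
    have hab : a < b := by
      rw [hurep, hvrep, hlt] at huv; exact huv
    -- the c-values different from w : either u or v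
    have key : ∀ w : Fin n → ℝ, w ∈ L → w ∉ pushL '' (↑Cbar : Set (Fin n → ℝ)) →
        ∃ ε₀ : ℝ, 0 < ε₀ ∧ ∀ ε : ℝ, 0 < ε → ε ≤ ε₀ → ∀ l, 1 ≤ l → l ≤ r →
          ((c l ≤ w + ε • m) ↔ (c l ≤ w - ε • m)) := by
      intro w hwL hwim
      have hwrep : w = u₀ + τ w • m := hLrep w hwL
      have htne : ∀ l, 1 ≤ l → l ≤ r → t l ≠ τ w := by
        intro l h1 h2 he
        apply hwim
        have : c l = w := by rw [hct l h1 h2, he, ← hwrep]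
        rw [← this]
        obtain ⟨x, hxC, hx⟩ := hcmemim l h1 h2
        exact ⟨x, hxC, hx⟩
      have hrne : (Finset.Icc 1 r).Nonempty := ⟨1, by simp [Finset.mem_Icc, hr]⟩
      set ε₀ : ℝ := ((Finset.Icc 1 r).inf' hrne (fun l => |t l - τ w|)) / 2 with hε₀def
      have hε₀pos : 0 < ε₀ := by
        rw [hε₀def]
        apply div_pos _ (by norm_num)
        rw [Finset.lt_inf'_iff]
        intro l hl
        rw [Finset.mem_Icc] at hl
        exact abs_pos.2 (sub_ne_zero.2 (htne l hl.1 hl.2))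
      refine ⟨ε₀, hε₀pos, ?_⟩
      intro ε hε hεle l hl1 hl2
      have hwp : w + ε • m = u₀ + (τ w + ε) • m := by
        conv_lhs => rw [hwrep]
        rw [hshift]
      have hwm : w - ε • m = u₀ + (τ w - ε) • m := by
        conv_lhs => rw [hwrep]
        rw [hshift']
      have hinf : ((Finset.Icc 1 r).inf' hrne fun l' => |t l' - τ w|) ≤ |t l - τ w| :=
        Finset.inf'_le _ (by simp [Finset.mem_Icc, hl1, hl2] : l ∈ Finset.Icc 1 r)
      have habs : 0 < |t l - τ w| := abs_pos.2 (sub_ne_zero.2 (htne l hl1 hl2))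
      have hgap' : ε < |t l - τ w| := by
        rw [hε₀def] at hεle
        linarith
      rw [hwp, hcle' l hl1 hl2, hwm, hcle' l hl1 hl2]
      rcases lt_or_gt_of_ne (sub_ne_zero.2 (htne l hl1 hl2)) with h | h
      · -- t l < τ w : both true
        rw [abs_of_neg (by linarith : t l - τ w < 0)] at hgap'
        constructor <;> intro <;> linarith
      · -- t l > τ w : both false
        rw [abs_of_pos (by linarith : 0 < t l - τ w)] at hgap'
        constructor <;> intro <;> linarith
    rcases hcase with hcase | hcase
    · -- u not in the image
      obtain ⟨ε₀, hε₀pos, hiff⟩ := key u huL hcase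
      refine ⟨ε₀, hε₀pos, ?_⟩
      intro ε hε hεle hslt0
      have hup : u + ε • m = u₀ + (a + ε) • m := by rw [hurep, hshift]
      have hum : u - ε • m = u₀ + (a - ε) • m := by rw [hurep, hshift']
      have hvp : v + ε • m = u₀ + (b + ε) • m := by rw [hvrep, hshift]
      have hvm : v - ε • m = u₀ + (b - ε) • m := by rw [hvrep, hshift']
      have hsltt : a + ε < b - ε := by rw [hup, hvm, hlt] at hslt0; exact hslt0
      have hle_pm : u + ε • m ≤ v - ε • m := by rw [hup, hvm, hle]; linarith
      have hle_mm : u - ε • m ≤ v - ε • m := by rw [hum, hvm, hle]; linarith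
      have hle_pp : u + ε • m ≤ v + ε • m := by rw [hup, hvp, hle]; linarith
      have hle_mp : u - ε • m ≤ v + ε • m := by rw [hum, hvp, hle]; linarith
      have hle_mpu : u - ε • m ≤ u + ε • m := by rw [hum, hup, hle]; linarith
      have hmemup : u + ε • m ∈ L := hup ▸ hmemL _
      have hmemum : u - ε • m ∈ L := hum ▸ hmemL _
      have hmemvp : v + ε • m ∈ L := hvp ▸ hmemL _
      have hmemvm : v - ε • m ∈ L := hvm ▸ hmemL _
      by_cases hex : ∃ l, 1 ≤ l ∧ l ≤ r ∧ c l ≤ u - ε • m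
      · obtain ⟨k, hk1, hk2, hk3, hk4⟩ := hKex _ hex
        have hk3' : c k ≤ u + ε • m := hk3.trans hle_mpu
        have hk4' : ∀ l, 1 ≤ l → l ≤ r → c l ≤ u + ε • m → l ≤ k := by
          intro l h1 h2 h3
          exact hk4 l h1 h2 ((hiff ε hε hεle l h1 h2).1 h3)
        obtain ⟨k1, hk11, hk12, hk13, hk14⟩ := hKex (v - ε • m) ⟨k, hk1, hk2, hk3.trans hle_mm⟩
        obtain ⟨k2, hk21, hk22, hk23, hk24⟩ := hKex (v + ε • m) ⟨k, hk1, hk2, hk3.trans hle_mp⟩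
        have R1 : rho M (u + ε • m) (v - ε • m) = rho M (c k) (c k1) :=
          hrhoeq _ _ k k1 hmemup hmemvm hle_pm hk1 hk2 hk3' hk4' hk11 hk12 hk13 hk14
        have R2 : rho M (u - ε • m) (v - ε • m) = rho M (c k) (c k1) :=
          hrhoeq _ _ k k1 hmemum hmemvm hle_mm hk1 hk2 hk3 hk4 hk11 hk12 hk13 hk14
        have R3 : rho M (u + ε • m) (v + ε • m) = rho M (c k) (c k2) :=
          hrhoeq _ _ k k2 hmemup hmemvp hle_pp hk1 hk2 hk3' hk4' hk21 hk22 hk23 hk24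
        have R4 : rho M (u - ε • m) (v + ε • m) = rho M (c k) (c k2) :=
          hrhoeq _ _ k k2 hmemum hmemvp hle_mp hk1 hk2 hk3 hk4 hk21 hk22 hk23 hk24
        rw [R1, R2, R3, R4]; ring
      · push_neg at hex
        have hexp : ∀ l, 1 ≤ l → l ≤ r → ¬ c l ≤ u + ε • m := by
          intro l h1 h2 h3
          exact hex l h1 h2 ((hiff ε hε hεle l h1 h2).1 h3)
        have hexm : ∀ l, 1 ≤ l → l ≤ r → ¬ c l ≤ u - ε • m := fun l h1 h2 => hex l h1 h2
        have hnem := hnoc _ hmemum hexm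
        have hnep := hnoc _ hmemup hexp
        rw [hrho0 _ _ hle_pm hnep, hrho0 _ _ hle_mm hnem, hrho0 _ _ hle_pp hnep,
          hrho0 _ _ hle_mp hnem]
        ring
    · -- v not in the image
      obtain ⟨ε₀, hε₀pos, hiff⟩ := key v hvL hcase
      refine ⟨ε₀, hε₀pos, ?_⟩
      intro ε hε hεle hslt0
      have hup : u + ε • m = u₀ + (a + ε) • m := by rw [hurep, hshift]
      have hum : u - ε • m = u₀ + (a - ε) • m := by rw [hurep, hshift']
      have hvp : v + ε • m = u₀ + (b + ε) • m := by rw [hvrep, hshift]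
      have hvm : v - ε • m = u₀ + (b - ε) • m := by rw [hvrep, hshift']
      have hsltt : a + ε < b - ε := by rw [hup, hvm, hlt] at hslt0; exact hslt0
      have hle_pm : u + ε • m ≤ v - ε • m := by rw [hup, hvm, hle]; linarith
      have hle_mm : u - ε • m ≤ v - ε • m := by rw [hum, hvm, hle]; linarith
      have hle_pp : u + ε • m ≤ v + ε • m := by rw [hup, hvp, hle]; linarith
      have hle_mp : u - ε • m ≤ v + ε • m := by rw [hum, hvp, hle]; linarith
      have hle_mpu : u - ε • m ≤ u + ε • m := by rw [hum, hup, hle]; linarith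
      have hmemup : u + ε • m ∈ L := hup ▸ hmemL _
      have hmemum : u - ε • m ∈ L := hum ▸ hmemL _
      have hmemvp : v + ε • m ∈ L := hvp ▸ hmemL _
      have hmemvm : v - ε • m ∈ L := hvm ▸ hmemL _
      by_cases hex : ∃ l, 1 ≤ l ∧ l ≤ r ∧ c l ≤ u + ε • m
      · obtain ⟨k, hk1, hk2, hk3, hk4⟩ := hKex _ hex
        obtain ⟨k1, hk11, hk12, hk13, hk14⟩ := hKex (v - ε • m) ⟨k, hk1, hk2, hk3.trans hle_pm⟩
        have hk13' : c k1 ≤ v + ε • m := (hiff ε hε hεle k1 hk11 hk12).2 hk13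
        have hk14' : ∀ l, 1 ≤ l → l ≤ r → c l ≤ v + ε • m → l ≤ k1 := by
          intro l h1 h2 h3
          exact hk14 l h1 h2 ((hiff ε hε hεle l h1 h2).1 h3)
        have R1 : rho M (u + ε • m) (v - ε • m) = rho M (c k) (c k1) :=
          hrhoeq _ _ k k1 hmemup hmemvm hle_pm hk1 hk2 hk3 hk4 hk11 hk12 hk13 hk14
        have R3 : rho M (u + ε • m) (v + ε • m) = rho M (c k) (c k1) :=
          hrhoeq _ _ k k1 hmemup hmemvp hle_pp hk1 hk2 hk3 hk4 hk11 hk12 hk13' hk14'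
        by_cases hex2 : ∃ l, 1 ≤ l ∧ l ≤ r ∧ c l ≤ u - ε • m
        · obtain ⟨k', hk'1, hk'2, hk'3, hk'4⟩ := hKex _ hex2
          have R2 : rho M (u - ε • m) (v - ε • m) = rho M (c k') (c k1) :=
            hrhoeq _ _ k' k1 hmemum hmemvm hle_mm hk'1 hk'2 hk'3 hk'4 hk11 hk12 hk13 hk14
          have R4 : rho M (u - ε • m) (v + ε • m) = rho M (c k') (c k1) :=
            hrhoeq _ _ k' k1 hmemum hmemvp hle_mp hk'1 hk'2 hk'3 hk'4 hk11 hk12 hk13' hk14'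
          rw [R1, R2, R3, R4]; ring
        · push_neg at hex2
          have hnem := hnoc _ hmemum (fun l h1 h2 => hex2 l h1 h2)
          rw [R1, R3, hrho0 _ _ hle_mm hnem, hrho0 _ _ hle_mp hnem]; ring
      · push_neg at hex
        have hexm : ∀ l, 1 ≤ l → l ≤ r → ¬ c l ≤ u - ε • m := by
          intro l h1 h2 h3
          exact hex l h1 h2 (h3.trans hle_mpu)
        have hnem := hnoc _ hmemum hexm
        have hnep := hnoc _ hmemup (fun l h1 h2 => hex l h1 h2)
        rw [hrho0 _ _ hle_pm hnep, hrho0 _ _ hle_mm hnem, hrho0 _ _ hle_pp hnep,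
          hrho0 _ _ hle_mp hnem]
        ring
  have sltle : ∀ x y : Fin n → ℝ, SLt x y → x ≤ y := fun x y h => Pi.le_def.mpr fun i => (h i).le
  refine ⟨parta, partb, ?_, ?_⟩
  · -- ## Part (c)
    intro u v huL hvL huv hmu
    by_contra hc
    refine hmu ?_
    have hcase : u ∉ pushL '' (↑Cbar : Set (Fin n → ℝ)) ∨
        v ∉ pushL '' (↑Cbar : Set (Fin n → ℝ)) := by tauto
    obtain ⟨ε₀, hε₀pos, hΔ⟩ := partb u v huL hvL huv hcase
    have hurep : u = u₀ + τ u • m := hLrep u huL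
    have hvrep : v = u₀ + τ v • m := hLrep v hvL
    have hab : τ u < τ v := by
      have h := huv i0
      simp only [hτdef]
      rw [div_lt_div_iff₀ hm0 hm0]
      nlinarith
    set ε : ℝ := min ε₀ ((τ v - τ u)/4) with hεdef
    have hεpos : 0 < ε := lt_min hε₀pos (by linarith)
    have hεle : ε ≤ ε₀ := min_le_left _ _
    have hεle' : ε ≤ (τ v - τ u)/4 := min_le_right _ _
    have he0 : SLt 0 (ε • m) := by
      intro i
      simp only [Pi.zero_apply, Pi.smul_apply, smul_eq_mul]
      exact mul_pos hεpos (hm i)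
    have hup : u + ε • m = u₀ + (τ u + ε) • m := by
      conv_lhs => rw [hurep]
      rw [hshift]
    have hvm : v - ε • m = u₀ + (τ v - ε) • m := by
      conv_lhs => rw [hvrep]
      rw [hshift']
    have hslt : SLt (u + ε • m) (v - ε • m) := by
      rw [hup, hvm, hlt]; linarith
    unfold mu
    apply IsLeast.csInf_eq
    constructor
    · exact ⟨ε • m, he0, hslt, (hΔ ε hεpos hεle hslt).symm⟩
    · rintro z ⟨e, he0', heuv, rfl⟩
      have h1 : u - e ≤ u + e := Pi.le_def.mpr fun i => by
        have := he0' i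
        simp only [Pi.zero_apply] at this
        simp only [Pi.sub_apply, Pi.add_apply]
        linarith
      have h2 : u + e ≤ v - e := sltle _ _ heuv
      have h3 : v - e ≤ v + e := Pi.le_def.mpr fun i => by
        have := he0' i
        simp only [Pi.zero_apply] at this
        simp only [Pi.sub_apply, Pi.add_apply]
        linarith
      have P := rho_P M h1 h2 h3
      omega
  · -- ## Part (d)
    intro i j hi1 hij hjr
    have hir : i ≤ r := (hij.trans_le hjr).le
    have hj1 : 1 ≤ j := hi1.trans hij.le
    have hj11 : 1 ≤ j - 1 := by omega
    have hj1r : j - 1 ≤ r := by omega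
    obtain ⟨ε₀, hε₀pos, hΔ⟩ := parta i j hi1 hij hjr
    have htij : t i < t j := htmono i j hi1 hij hjr
    set ε : ℝ := min ε₀ ((t j - t i)/4) with hεdef
    have hεpos : 0 < ε := lt_min hε₀pos (by linarith)
    have hεle : ε ≤ ε₀ := min_le_left _ _
    have hεle' : ε ≤ (t j - t i)/4 := min_le_right _ _
    have he0 : SLt 0 (ε • m) := by
      intro idx
      simp only [Pi.zero_apply, Pi.smul_apply, smul_eq_mul]
      exact mul_pos hεpos (hm idx)
    have hslt : SLt (c i + ε • m) (c j - ε • m) := by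
      rw [hct i hi1 hir, hct j hj1 hjr, hshift, hshift', hlt]; linarith
    have hcij : c i ≤ c j := hcle i j hi1 hij.le hjr
    unfold mu
    apply IsLeast.csInf_eq
    constructor
    · exact ⟨ε • m, he0, hslt, (hΔ ε hεpos hεle hslt).symm⟩
    · rintro z ⟨e, he0', heuv, rfl⟩
      -- order facts
      have hepos : ∀ idx, 0 < e idx := fun idx => by
        have := he0' idx; simpa using this
      have hciue : c i ≤ c i + e := Pi.le_def.mpr fun idx => by
        simp only [Pi.add_apply]; linarith [hepos idx]
      have hcjue : c j ≤ c j + e := Pi.le_def.mpr fun idx => by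
        simp only [Pi.add_apply]; linarith [hepos idx]
      have hle_pm : c i + e ≤ c j - e := sltle _ _ heuv
      have hle_mpe : c i - e ≤ c i + e := Pi.le_def.mpr fun idx => by
        simp only [Pi.sub_apply, Pi.add_apply]; linarith [hepos idx]
      have hle_mm : c i - e ≤ c j - e := Pi.le_def.mpr fun idx => by
        simp only [Pi.sub_apply]; linarith [Pi.le_def.mp hcij idx]
      have hle_vmp : c j - e ≤ c j + e := Pi.le_def.mpr fun idx => by
        simp only [Pi.sub_apply, Pi.add_apply]; linarith [hepos idx]
      have hle_pp : c i + e ≤ c j + e := hle_pm.trans hle_vmp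
      have hle_mp : c i - e ≤ c j + e := hle_mm.trans hle_vmp
      -- base element of Cbar below c i
      obtain ⟨x₀, hx₀C, hx₀⟩ := hcmemim i hi1 hir
      have hx₀C' : x₀ ∈ Cbar := hx₀C
      have hx₀le : x₀ ≤ c i := hx₀ ▸ hpushge x₀
      have hexP : ∃ c' ∈ Cbar, c' ≤ c i + e := ⟨x₀, hx₀C', hx₀le.trans hciue⟩
      have hexM : ∃ c' ∈ Cbar, c' ≤ c j - e := ⟨x₀, hx₀C', (hx₀le.trans hciue).trans hle_pm⟩
      have hexVP : ∃ c' ∈ Cbar, c' ≤ c j + e := ⟨x₀, hx₀C', hx₀le.trans (hcij.trans hcjue)⟩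
      obtain ⟨aP, haP⟩ := hbar _ hexP
      obtain ⟨bM, hbM⟩ := hbar _ hexM
      obtain ⟨bP, hbP⟩ := hbar _ hexVP
      -- hstar translations
      have E1 : rho M (c i + e) (c j - e) = rho M aP bM :=
        (hstar _ _ hle_pm).1 hexP aP bM haP hbM
      have E3 : rho M (c i + e) (c j + e) = rho M aP bP :=
        (hstar _ _ hle_pp).1 hexP aP bP haP hbP
      -- chain bounds
      have hDi := hD i hi1 hir
      have hDj := hD j hj1 hjr
      have hDj1 := hD (j-1) hj11 hj1r
      have hDi_aP : D i ≤ aP := haP.2 ⟨hDi.1.1, hDi.1.2.trans hciue⟩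
      have haP_bM : aP ≤ bM := hbM.2 ⟨haP.1.1, haP.1.2.trans hle_pm⟩
      have hbM_Dj1 : bM ≤ D (j-1) := by
        apply hDj1.2
        refine ⟨hbM.1.1, ?_⟩
        have hstrict : ∀ idx, bM idx < c j idx := fun idx => by
          have h1 := Pi.le_def.mp hbM.1.2 idx
          simp only [Pi.sub_apply] at h1
          linarith [hepos idx]
        obtain ⟨l, hl1, hl2, hble, htl⟩ := hstrictidx bM hbM.1.1 (c j) (hcmemL j hj1 hjr) hstrict
        have htl' : t l < t j := htl
        have hlj : l < j := by
          by_contra hcon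
          push_neg at hcon
          have := htmono' j l hj1 hcon hl2
          linarith
        exact hble.trans (hcle l (j-1) hl1 (by omega) hj1r)
      have hDj1_Dj : D (j-1) ≤ D j :=
        hDj.2 ⟨hDj1.1.1, hDj1.1.2.trans (hcle (j-1) j hj11 (by omega) hjr)⟩
      have hDj_bP : D j ≤ bP := hbP.2 ⟨hDj.1.1, hDj.1.2.trans hcjue⟩
      have G1 : rho M (c i) (c (j-1)) = rho M (D i) (D (j-1)) :=
        hrhoDD i (j-1) hi1 hir hj11 hj1r (by omega)
      have G3 : rho M (c i) (c j) = rho M (D i) (D j) :=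
        hrhoDD i j hi1 hir hj1 hjr hij.le
      by_cases hexm : ∃ c' ∈ Cbar, c' ≤ c i - e
      · obtain ⟨aM, haM⟩ := hbar _ hexm
        have E2 : rho M (c i - e) (c j - e) = rho M aM bM :=
          (hstar _ _ hle_mm).1 hexm aM bM haM hbM
        have E4 : rho M (c i - e) (c j + e) = rho M aM bP :=
          (hstar _ _ hle_mp).1 hexm aM bP haM hbP
        have hstrict : ∀ idx, aM idx < c i idx := fun idx => by
          have h1 := Pi.le_def.mp haM.1.2 idx
          simp only [Pi.sub_apply] at h1
          linarith [hepos idx]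
        obtain ⟨l, hl1, hl2, hale, htl⟩ := hstrictidx aM haM.1.1 (c i) (hcmemL i hi1 hir) hstrict
        have htl' : t l < t i := htl
        have hli : l < i := by
          by_contra hcon
          push_neg at hcon
          have := htmono' i l hi1 hcon hl2
          linarith
        have hi2 : 2 ≤ i := by omega
        have hDi1 := hD (i-1) (by omega) (by omega)
        have haM_Di1 : aM ≤ D (i-1) :=
          hDi1.2 ⟨haM.1.1, hale.trans (hcle l (i-1) hl1 (by omega) (by omega))⟩
        have hDi1_Di : D (i-1) ≤ D i :=
          hDi.2 ⟨hDi1.1.1, hDi1.1.2.trans (hcle (i-1) i (by omega) (by omega) hir)⟩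
        have G2 : rho M (c (i-1)) (c (j-1)) = rho M (D (i-1)) (D (j-1)) :=
          hrhoDD (i-1) (j-1) (by omega) (by omega) hj11 hj1r (by omega)
        have G4 : rho M (c (i-1)) (c j) = rho M (D (i-1)) (D j) :=
          hrhoDD (i-1) j (by omega) (by omega) hj1 hjr (by omega)
        have QM := rho_Qmono M haM_Di1 hDi1_Di hDi_aP haP_bM hbM_Dj1 hDj1_Dj hDj_bP
        unfold rhoz
        rw [if_neg (by omega), if_neg (by omega), if_neg (by omega), if_neg (by omega)]
        rw [E1, E2, E3, E4, G1, G2, G3, G4]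
        linarith [QM]
      · have E2 : rho M (c i - e) (c j - e) = 0 := hrho0 _ _ hle_mm hexm
        have E4 : rho M (c i - e) (c j + e) = 0 := hrho0 _ _ hle_mp hexm
        have QH := rho_Qhalf M hDi_aP haP_bM hbM_Dj1 hDj1_Dj hDj_bP
        by_cases hi2 : 2 ≤ i
        · have G2' : rho M (c (i-1)) (c j) ≤ rho M (c (i-1)) (c (j-1)) :=
            rho_mono_right M (hcle (i-1) (j-1) (by omega) (by omega) hj1r)
              (hcle (j-1) j hj11 (by omega) hjr)
          unfold rhoz
          rw [if_neg (by omega), if_neg (by omega), if_neg (by omega), if_neg (by omega)]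
          rw [E1, E2, E3, E4, G1, G3]
          push_cast
          omega
        · unfold rhoz
          rw [if_neg (by omega), if_pos (by omega), if_neg (by omega), if_pos (by omega)]
          rw [E1, E2, E3, E4, G1, G3]
          push_cast
          linarith [QH]
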